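/- Let n ≥ 1, let a, b ∈ ℝⁿ with a ≤ b componentwise, let T be a divergence-free symmetric 2-tensor field of class C¹ on ℝⁿ, and let X be a C¹ conformal Killing field on ℝⁿ. Then the total outward flux of the vector field T♯X through the boundary of the rectangular box [a, b] equals the bulk integral of (1/n)·(trace T)·(div X): Σᵢ [ ∫_{face xᵢ = bᵢ} ⟪(T♯X) y, eᵢ⟫ dy − ∫_{face xᵢ = aᵢ} ⟪(T♯X) y, eᵢ⟫ dy ] = (1/n)·∫_{[a,b]} (trace of T x)·(div X x) dx, where the face integrals are over the (n−1)-dimensional faces of the box. (This is the flat-space integrated Bianchi identity of Lemma 2.1 of the paper, stated on rectangular boxes so that the divergence theorem applies.) -/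

import Mathlib

open MeasureTheory

/-- The `i`-th standard basis vector of `ℝⁿ⁺¹ = Fin (n+1) → ℝ`. -/
noncomputable def stdBasis (n : ℕ) (i : Fin (n + 1)) : Fin (n + 1) → ℝ :=
  Pi.single i (1 : ℝ)

/-- The Euclidean divergence of a vector field on `ℝⁿ⁺¹`: the trace of its derivative. -/
noncomputable def divE (n : ℕ) (X : (Fin (n + 1) → ℝ) → (Fin (n + 1) → ℝ))
    (x : Fin (n + 1) → ℝ) : ℝ :=
  ∑ i : Fin (n + 1), fderiv ℝ X x (stdBasis n i) i

private lemma sum_mul_single_aux {m : ℕ} (u : Fin (m + 1) → ℝ) (j : Fin (m + 1)) :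
    ∑ k, u k * stdBasis m j k = u j := by
  simp [stdBasis, Pi.single_apply, mul_ite, Finset.sum_ite_eq]

private lemma single_mul_single_aux {m : ℕ} (i j : Fin (m + 1)) :
    ∑ k, stdBasis m i k * stdBasis m j k = if i = j then (1 : ℝ) else 0 := by
  by_cases hij : i = j
  · subst hij; simp [stdBasis, Pi.single_apply]
  · rw [Finset.sum_eq_zero, if_neg hij]
    intro k _
    rcases eq_or_ne k i with rfl | hki
    · simp [stdBasis, Pi.single_apply, Ne.symm hij, hij]
    · simp [stdBasis, Pi.single_apply, hki]

private lemma clm_expand_aux {m : ℕ} (B : (Fin (m+1) → ℝ) →L[ℝ] (Fin (m+1) → ℝ) →L[ℝ] ℝ)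
    (u v : Fin (m+1) → ℝ) :
    B u v = ∑ j, u j * B (stdBasis m j) v := by
  have hb : u = ∑ j, u j • (stdBasis m j) := by
    funext k
    simp [stdBasis, Finset.sum_apply, Pi.single_apply, mul_ite, Finset.sum_ite_eq]
  conv_lhs => rw [hb]
  rw [map_sum, ContinuousLinearMap.sum_apply]
  exact Finset.sum_congr rfl fun j _ => by
    rw [_root_.map_smul, ContinuousLinearMap.smul_apply, smul_eq_mul]

private lemma key_alg_aux {m : ℕ} (B : (Fin (m+1) → ℝ) →L[ℝ] (Fin (m+1) → ℝ) →L[ℝ] ℝ)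
    (hBsymm : ∀ v w, B v w = B w v)
    (A : Fin (m + 1) → Fin (m + 1) → ℝ) (d : ℝ)
    (hCK : ∀ i j, A j i + A i j =
      (2 / ((m : ℝ) + 1)) * d * (if i = j then 1 else 0)) :
    ∑ i, ∑ j, A j i * B (stdBasis m j) (stdBasis m i) =
      (1 / ((m : ℝ) + 1)) * ((∑ i, B (stdBasis m i) (stdBasis m i)) * d) := by
  set S : ℝ := ∑ i, ∑ j, A j i * B (stdBasis m j) (stdBasis m i) with hS
  have hSS' : S = ∑ i, ∑ j, A i j * B (stdBasis m j) (stdBasis m i) := by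
    rw [hS, Finset.sum_comm]
    exact Finset.sum_congr rfl fun i _ => Finset.sum_congr rfl fun j _ => by
      rw [hBsymm (stdBasis m i) (stdBasis m j)]
  have h2S : 2 * S = (2 / ((m : ℝ) + 1)) * d * ∑ i, B (stdBasis m i) (stdBasis m i) := by
    have h1 : 2 * S = ∑ i, ∑ j, (A j i + A i j) * B (stdBasis m j) (stdBasis m i) := by
      nth_rewrite 1 [two_mul]
      nth_rewrite 2 [hSS']
      rw [hS, ← Finset.sum_add_distrib]
      refine Finset.sum_congr rfl fun i _ => ?_
      rw [← Finset.sum_add_distrib]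
      exact Finset.sum_congr rfl fun j _ => by ring
    rw [h1]
    have h2 : ∀ i : Fin (m + 1), ∑ j, (A j i + A i j) * B (stdBasis m j) (stdBasis m i)
        = (2 / ((m : ℝ) + 1)) * d * B (stdBasis m i) (stdBasis m i) := by
      intro i
      rw [Finset.sum_congr rfl fun j (_ : j ∈ Finset.univ) => by rw [hCK i j]]
      simp [ite_mul, mul_ite, Finset.sum_ite_eq]
    rw [Finset.sum_congr rfl fun i _ => h2 i, ← Finset.mul_sum]
  have hm1 : ((m : ℝ) + 1) ≠ 0 := by positivity
  field_simp at h2S ⊢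
  linarith

private noncomputable def fprime (n : ℕ)
    (T : (Fin (n + 1) → ℝ) → ((Fin (n + 1) → ℝ) →L[ℝ] (Fin (n + 1) → ℝ) →L[ℝ] ℝ))
    (X : (Fin (n + 1) → ℝ) → (Fin (n + 1) → ℝ)) (x : Fin (n + 1) → ℝ) :
    (Fin (n + 1) → ℝ) →L[ℝ] (Fin (n + 1) → ℝ) :=
  ContinuousLinearMap.pi (fun j => (ContinuousLinearMap.apply ℝ ℝ (stdBasis n j)).comp
    (((T x).comp (fderiv ℝ X x)) + ((fderiv ℝ T x).flip (X x))))

set_option maxHeartbeats 2000000 in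
/-- **Flat-space integrated Bianchi identity on rectangular boxes (Lemma 2.1).**
Let `T` be a divergence-free symmetric 2-tensor field of class `C¹` on `ℝⁿ⁺¹`, let `X` be a
`C¹` conformal Killing field, and let `Y = T♯X` be the vector field defined by
`⟪Y x, w⟫ = (T x)(X x, w)`. Then the total outward flux of `Y` through the boundary of a
rectangular box `[a, b]` equals `1/(n+1)` times the bulk integral of `(tr T)·(div X)`. -/
theorem flux_eq_bulk_integral_trace_div
    (n : ℕ) (a b : Fin (n + 1) → ℝ) (hab : a ≤ b)
    (T : (Fin (n + 1) → ℝ) →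
      ((Fin (n + 1) → ℝ) →L[ℝ] (Fin (n + 1) → ℝ) →L[ℝ] ℝ))
    (hT : ContDiff ℝ 1 T)
    (hTsymm : ∀ x v w, T x v w = T x w v)
    (hTdivfree : ∀ (x v : Fin (n + 1) → ℝ),
      ∑ i : Fin (n + 1), fderiv ℝ T x (stdBasis n i) (stdBasis n i) v = 0)
    (X : (Fin (n + 1) → ℝ) → (Fin (n + 1) → ℝ))
    (hX : ContDiff ℝ 1 X)
    (hCK : ∀ (x v w : Fin (n + 1) → ℝ),
      (∑ i : Fin (n + 1), fderiv ℝ X x v i * w i) +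
          (∑ i : Fin (n + 1), fderiv ℝ X x w i * v i) =
        (2 / ((n : ℝ) + 1)) * divE n X x * ∑ i : Fin (n + 1), v i * w i)
    (Y : (Fin (n + 1) → ℝ) → (Fin (n + 1) → ℝ))
    (hY : ∀ (x w : Fin (n + 1) → ℝ),
      ∑ i : Fin (n + 1), Y x i * w i = T x (X x) w) :
    ∑ i : Fin (n + 1),
        ((∫ y in Set.Icc (a ∘ i.succAbove) (b ∘ i.succAbove),
            Y (i.insertNth (b i) y) i) -
          ∫ y in Set.Icc (a ∘ i.succAbove) (b ∘ i.succAbove),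
            Y (i.insertNth (a i) y) i) =
      (1 / ((n : ℝ) + 1)) * ∫ x in Set.Icc a b,
        (∑ i : Fin (n + 1), T x (stdBasis n i) (stdBasis n i)) * divE n X x := by
  classical
  letI i1 : NormedAddCommGroup ((Fin (n + 1) → ℝ) →L[ℝ] ℝ) := inferInstance
  letI i2 : NormedSpace ℝ ((Fin (n + 1) → ℝ) →L[ℝ] ℝ) := inferInstance
  letI i3 : NormedAddCommGroup ((Fin (n + 1) → ℝ) →L[ℝ] (Fin (n + 1) → ℝ) →L[ℝ] ℝ) :=
    inferInstance
  letI i4 : NormedSpace ℝ ((Fin (n + 1) → ℝ) →L[ℝ] (Fin (n + 1) → ℝ) →L[ℝ] ℝ) := inferInstance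
  have hTd : Differentiable ℝ T := hT.differentiable one_ne_zero
  have hXd : Differentiable ℝ X := hX.differentiable one_ne_zero
  -- components of Y
  have hYcomp : ∀ x j, Y x j = T x (X x) (stdBasis n j) := by
    intro x j
    rw [← hY x (stdBasis n j), sum_mul_single_aux]
  -- symmetry of fderiv T
  have hTder : ∀ (x v w : Fin (n + 1) → ℝ),
      HasFDerivAt (fun y => T y v w)
        (((ContinuousLinearMap.apply ℝ ℝ w).comp
          (ContinuousLinearMap.apply ℝ ((Fin (n + 1) → ℝ) →L[ℝ] ℝ) v)).comp
            (fderiv ℝ T x)) x := by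
    intro x v w
    have hc := (((ContinuousLinearMap.apply ℝ ℝ w).comp
      (ContinuousLinearMap.apply ℝ ((Fin (n + 1) → ℝ) →L[ℝ] ℝ) v)).hasFDerivAt).comp x
      (hTd x).hasFDerivAt
    exact hc
  have hfTsymm : ∀ (x h v w : Fin (n + 1) → ℝ),
      fderiv ℝ T x h v w = fderiv ℝ T x h w v := by
    intro x h v w
    have h1 : (fun y => T y v w) = fun y => T y w v := funext fun y => hTsymm y v w
    have h2 := hTder x v w
    rw [h1] at h2
    have h4 := congrArg (fun L => L h) (h2.unique (hTder x w v))
    simpa using h4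
  -- the derivative candidate for Y
  have hg : ∀ x : Fin (n + 1) → ℝ, HasFDerivAt (fun y => (T y) (X y))
      (((T x).comp (fderiv ℝ X x)) + ((fderiv ℝ T x).flip (X x))) x := by
    intro x
    exact (hTd x).hasFDerivAt.clm_apply (hXd x).hasFDerivAt
  have hYder : ∀ x : Fin (n + 1) → ℝ, HasFDerivAt Y
      (fprime n T X x) x := by
    intro x
    apply hasFDerivAt_pi''
    intro j
    have hj : (fun y => Y y j) = fun y => (T y) (X y) (stdBasis n j) :=
      funext fun y => hYcomp y j
    rw [hj]
    have h5 := ((ContinuousLinearMap.apply ℝ ℝ (stdBasis n j)).hasFDerivAt).comp x (hg x)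
    convert h5 using 1
    · rfl
    · exact ContinuousLinearMap.ext fun v => rfl
  -- components of the derivative
  have hf'app : ∀ (x : Fin (n + 1) → ℝ) (i : Fin (n + 1)),
      fprime n T X x (Pi.single i 1) i =
      T x (fderiv ℝ X x (stdBasis n i)) (stdBasis n i) +
        fderiv ℝ T x (stdBasis n i) (X x) (stdBasis n i) := by
    intro x i
    have : (Pi.single i 1 : Fin (n + 1) → ℝ) = stdBasis n i := rfl
    rw [this]
    simp [fprime]
  -- the pointwise identity
  have key : ∀ x : Fin (n + 1) → ℝ,
      ∑ i, (T x (fderiv ℝ X x (stdBasis n i)) (stdBasis n i) +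
        fderiv ℝ T x (stdBasis n i) (X x) (stdBasis n i)) =
        (1 / ((n : ℝ) + 1)) *
          ((∑ i, T x (stdBasis n i) (stdBasis n i)) * divE n X x) := by
    intro x
    have hzero : ∑ i, fderiv ℝ T x (stdBasis n i) (X x) (stdBasis n i) = 0 := by
      rw [Finset.sum_congr rfl fun i (_ : i ∈ Finset.univ) =>
        hfTsymm x (stdBasis n i) (X x) (stdBasis n i)]
      exact hTdivfree x (X x)
    have hCK' : ∀ i j, (fun j i => fderiv ℝ X x (stdBasis n i) j) j i +
        (fun j i => fderiv ℝ X x (stdBasis n i) j) i j =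
        (2 / ((n : ℝ) + 1)) * divE n X x * (if i = j then 1 else 0) := by
      intro i j
      have h := hCK x (stdBasis n i) (stdBasis n j)
      rw [sum_mul_single_aux, sum_mul_single_aux, single_mul_single_aux] at h
      exact h
    have hexp : ∀ i, T x (fderiv ℝ X x (stdBasis n i)) (stdBasis n i) =
        ∑ j, fderiv ℝ X x (stdBasis n i) j * T x (stdBasis n j) (stdBasis n i) :=
      fun i => clm_expand_aux (T x) (fderiv ℝ X x (stdBasis n i)) (stdBasis n i)
    rw [Finset.sum_add_distrib, hzero, add_zero,
      Finset.sum_congr rfl fun i _ => hexp i]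
    exact key_alg_aux (T x) (hTsymm x) (fun j i => fderiv ℝ X x (stdBasis n i) j)
      (divE n X x) hCK'
  -- continuity
  have hTc : Continuous T := hT.continuous
  have hXc : Continuous X := hX.continuous
  have hTdc : Continuous (fderiv ℝ T) := hT.continuous_fderiv one_ne_zero
  have hXdc : Continuous (fderiv ℝ X) := hX.continuous_fderiv one_ne_zero
  have hYc : Continuous Y := by
    have h6 : Y = fun x => fun j => T x (X x) (stdBasis n j) :=
      funext fun x => funext fun j => hYcomp x j
    rw [h6]
    exact continuous_pi fun j => (hTc.clm_apply hXc).clm_apply continuous_const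
  have hGc : Continuous fun x : Fin (n + 1) → ℝ =>
      ∑ i, (T x (fderiv ℝ X x (stdBasis n i)) (stdBasis n i) +
        fderiv ℝ T x (stdBasis n i) (X x) (stdBasis n i)) := by
    refine continuous_finset_sum _ fun i _ => Continuous.add ?_ ?_
    · exact (hTc.clm_apply (hXdc.clm_apply continuous_const)).clm_apply continuous_const
    · have h8 : Continuous fun x : Fin (n + 1) → ℝ => fderiv ℝ T x (stdBasis n i) :=
        hTdc.clm_apply continuous_const
      have h9 : Continuous fun x : Fin (n + 1) → ℝ => fderiv ℝ T x (stdBasis n i) (X x) :=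
        h8.clm_apply hXc
      exact h9.clm_apply continuous_const
  have Hi : IntegrableOn (fun x : Fin (n + 1) → ℝ =>
      ∑ i, fprime n T X x (Pi.single i 1) i) (Set.Icc a b) := by
    have h7 : (fun x : Fin (n + 1) → ℝ =>
        ∑ i, fprime n T X x (Pi.single i 1) i) =
        fun x => ∑ i, (T x (fderiv ℝ X x (stdBasis n i)) (stdBasis n i) +
          fderiv ℝ T x (stdBasis n i) (X x) (stdBasis n i)) :=
      funext fun x => Finset.sum_congr rfl fun i _ => hf'app x i
    rw [h7]
    exact hGc.continuousOn.integrableOn_compact isCompact_Icc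
  -- divergence theorem
  have hdiv := integral_divergence_of_hasFDerivAt_off_countable a b hab Y
    (fprime n T X) (∅ : Set (Fin (n + 1) → ℝ))
    Set.countable_empty hYc.continuousOn (fun x _ => hYder x) Hi
  rw [← hdiv]
  calc ∫ x in Set.Icc a b, ∑ i, fprime n T X x (Pi.single i 1) i
      = ∫ x in Set.Icc a b, (1 / ((n : ℝ) + 1)) *
          ((∑ i, T x (stdBasis n i) (stdBasis n i)) * divE n X x) := by
        congr 1
        funext x
        rw [Finset.sum_congr rfl fun i _ => hf'app x i]
        exact key x
    _ = (1 / ((n : ℝ) + 1)) * ∫ x in Set.Icc a b,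
          (∑ i, T x (stdBasis n i) (stdBasis n i)) * divE n X x := by
        rw [MeasureTheory.integral_const_mul]
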